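/- Let H_A and H_B be finite-dimensional complex Hilbert spaces, let R₀, R₁ be reflections on H_A, let S₀, S₁ be reflections on H_B, and let ψ ∈ H_A ⊗ H_B be a unit vector. Then Re⟨ψ, (R₀ ⊗ S₀ + R₀ ⊗ S₁ + R₁ ⊗ S₀ − R₁ ⊗ S₁)ψ⟩ ≤ 2√2; equivalently, the CHSH winning probability 1/2 + (1/8)·Re⟨ψ, (R₀ ⊗ S₀ + R₀ ⊗ S₁ + R₁ ⊗ S₀ − R₁ ⊗ S₁)ψ⟩ is at most cos²(π/8) = 1/2 + √2/4. -/

import Mathlib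

open scoped Matrix Kronecker ComplexConjugate

noncomputable section

abbrev Reg (n : ℕ) := (Fin n × Fin 2) → Fin 2

def cnorm {ι : Type*} [Fintype ι] (v : ι → ℂ) : ℝ :=
  Real.sqrt (∑ i, ‖v i‖ ^ 2)

def cinner {ι : Type*} [Fintype ι] (v w : ι → ℂ) : ℂ :=
  ∑ i, (starRingEnd ℂ) (v i) * w i

def IsReflection {ι : Type*} [Fintype ι] [DecidableEq ι] (M : Matrix ι ι ℂ) : Prop :=
  M.IsHermitian ∧ M * M = 1

def sx : Matrix (Fin 2) (Fin 2) ℂ := !![0, 1; 1, 0]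
def sy : Matrix (Fin 2) (Fin 2) ℂ := !![0, -Complex.I; Complex.I, 0]
def sz : Matrix (Fin 2) (Fin 2) ℂ := !![1, 0; 0, -1]

def onQubit {K : Type*} [Fintype K] [DecidableEq K] (k : K) (M : Matrix (Fin 2) (Fin 2) ℂ) :
    Matrix (K → Fin 2) (K → Fin 2) ℂ :=
  fun f g => if ∀ k', k' ≠ k → f k' = g k' then M (f k) (g k) else 0

def eprAmp : Fin 2 → Fin 2 → ℂ := fun a b => if a = b then ((Real.sqrt 2 : ℝ) : ℂ)⁻¹ else 0

def eprLocal (n : ℕ) : Reg n → ℂ := fun f => ∏ j : Fin n, eprAmp (f (j, 0)) (f (j, 1))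

def psiExt {dA dB : ℕ} (n : ℕ) (ψ : Fin dA × Fin dB → ℂ) :
    (Fin dA × Reg n) × (Fin dB × Reg n) → ℂ :=
  fun p => ψ (p.1.1, p.2.1) * eprLocal n p.1.2 * eprLocal n p.2.2

def NQubitHyp (n : ℕ) (ε : ℝ) {dA dB : ℕ}
    (XA ZA : Fin n → Matrix (Fin dA) (Fin dA) ℂ)
    (XB ZB : Fin n → Matrix (Fin dB) (Fin dB) ℂ)
    (ψ : Fin dA × Fin dB → ℂ) : Prop :=
  cnorm ψ = 1 ∧
  (∀ j, IsReflection (XA j) ∧ IsReflection (ZA j) ∧ IsReflection (XB j) ∧ IsReflection (ZB j)) ∧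
  (∀ j, XA j * ZA j + ZA j * XA j = 0) ∧
  (∀ j, XB j * ZB j + ZB j * XB j = 0) ∧
  (∀ P Q : Fin n → Matrix (Fin dA) (Fin dA) ℂ, (P = XA ∨ P = ZA) → (Q = XA ∨ Q = ZA) →
    ∀ i j : Fin n, i ≠ j →
    cnorm (((P i * Q j - Q j * P i) ⊗ₖ (1 : Matrix (Fin dB) (Fin dB) ℂ)).mulVec ψ) ≤ ε) ∧
  (∀ P Q : Fin n → Matrix (Fin dB) (Fin dB) ℂ, (P = XB ∨ P = ZB) → (Q = XB ∨ Q = ZB) →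
    ∀ i j : Fin n, i ≠ j →
    cnorm (((1 : Matrix (Fin dA) (Fin dA) ℂ) ⊗ₖ (P i * Q j - Q j * P i)).mulVec ψ) ≤ ε) ∧
  (∀ (P : Fin n → Matrix (Fin dA) (Fin dA) ℂ) (P' : Fin n → Matrix (Fin dB) (Fin dB) ℂ),
    ((P = XA ∧ P' = XB) ∨ (P = ZA ∧ P' = ZB)) →
    ∀ j, cnorm ((P j ⊗ₖ P' j).mulVec ψ - ψ) ≤ ε)


section helpers

variable {ι : Type*} [Fintype ι]

lemma cinner_mulVec_left (M : Matrix ι ι ℂ) (v w : ι → ℂ) :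
    cinner (M.mulVec v) w = cinner v (Mᴴ.mulVec w) := by
  simp only [cinner, Matrix.mulVec, dotProduct, Matrix.conjTranspose_apply,
    map_sum, map_mul, Finset.sum_mul, Finset.mul_sum]
  rw [Finset.sum_comm]
  refine Finset.sum_congr rfl fun i _ => Finset.sum_congr rfl fun j _ => ?_
  simp only [← starRingEnd_apply]
  ring

lemma cinner_eq_inner (v w : ι → ℂ) :
    cinner v w = inner (𝕜 := ℂ) ((WithLp.equiv 2 (ι → ℂ)).symm v) ((WithLp.equiv 2 (ι → ℂ)).symm w) := by
  simp [cinner, PiLp.inner_apply, RCLike.inner_apply]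
  exact Finset.sum_congr rfl fun i _ => mul_comm _ _

lemma cnorm_eq_norm (v : ι → ℂ) :
    cnorm v = ‖(WithLp.equiv 2 (ι → ℂ)).symm v‖ := by
  rw [cnorm, EuclideanSpace.norm_eq]
  rfl

lemma cnorm_sq_eq (v : ι → ℂ) : cnorm v ^ 2 = (cinner v v).re := by
  rw [cnorm_eq_norm, cinner_eq_inner, ← inner_self_eq_norm_sq (𝕜 := ℂ)]
  rfl

lemma cnorm_nonneg (v : ι → ℂ) : 0 ≤ cnorm v := Real.sqrt_nonneg _

lemma cnorm_mulVec_of_unitary [DecidableEq ι] (M : Matrix ι ι ℂ) (h : Mᴴ * M = 1) (v : ι → ℂ) :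
    cnorm (M.mulVec v) = cnorm v := by
  have h1 : cnorm (M.mulVec v) ^ 2 = cnorm v ^ 2 := by
    rw [cnorm_sq_eq, cnorm_sq_eq, cinner_mulVec_left, Matrix.mulVec_mulVec, h,
      Matrix.one_mulVec]
  calc cnorm (M.mulVec v) = Real.sqrt (cnorm (M.mulVec v) ^ 2) :=
        (Real.sqrt_sq (cnorm_nonneg _)).symm
    _ = Real.sqrt (cnorm v ^ 2) := by rw [h1]
    _ = cnorm v := Real.sqrt_sq (cnorm_nonneg _)

omit [Fintype ι] in
lemma kronecker_conjT {κ : Type*} (A : Matrix ι ι ℂ) (B : Matrix κ κ ℂ) :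
    (A ⊗ₖ B)ᴴ = Aᴴ ⊗ₖ Bᴴ := by
  ext i j
  simp [Matrix.conjTranspose_apply, mul_comm]

lemma cinner_add_right (v w u : ι → ℂ) : cinner v (w + u) = cinner v w + cinner v u := by
  simp [cinner, mul_add, Finset.sum_add_distrib]

lemma cinner_sub_right (v w u : ι → ℂ) : cinner v (w - u) = cinner v w - cinner v u := by
  simp [cinner, mul_sub, Finset.sum_sub_distrib]

end helpers

/-- Tsirelson's bound for the CHSH operator. -/
theorem stmt_7 (dA dB : ℕ)
    (R0 R1 : Matrix (Fin dA) (Fin dA) ℂ) (S0 S1 : Matrix (Fin dB) (Fin dB) ℂ)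
    (hR0 : IsReflection R0) (hR1 : IsReflection R1)
    (hS0 : IsReflection S0) (hS1 : IsReflection S1)
    (ψ : Fin dA × Fin dB → ℂ) (hψ : cnorm ψ = 1) :
    (cinner ψ ((R0 ⊗ₖ S0 + R0 ⊗ₖ S1 + R1 ⊗ₖ S0 - R1 ⊗ₖ S1).mulVec ψ)).re
        ≤ 2 * Real.sqrt 2 ∧
    1 / 2 + (1 / 8) *
        (cinner ψ ((R0 ⊗ₖ S0 + R0 ⊗ₖ S1 + R1 ⊗ₖ S0 - R1 ⊗ₖ S1).mulVec ψ)).re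
      ≤ Real.cos (Real.pi / 8) ^ 2 := by

  have hcos : Real.cos (Real.pi / 8) ^ 2 = 1 / 2 + Real.sqrt 2 / 4 := by
    rw [Real.cos_sq]
    rw [show 2 * (Real.pi / 8) = Real.pi / 4 by ring, Real.cos_pi_div_four]
    ring
  suffices h : (cinner ψ ((R0 ⊗ₖ S0 + R0 ⊗ₖ S1 + R1 ⊗ₖ S0 - R1 ⊗ₖ S1).mulVec ψ)).re
      ≤ 2 * Real.sqrt 2 by
    refine ⟨h, ?_⟩
    rw [hcos]; nlinarith [h]
  set a0 : Fin dA × Fin dB → ℂ := (R0 ⊗ₖ (1 : Matrix (Fin dB) (Fin dB) ℂ)).mulVec ψ with ha0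
  set a1 : Fin dA × Fin dB → ℂ := (R1 ⊗ₖ (1 : Matrix (Fin dB) (Fin dB) ℂ)).mulVec ψ with ha1
  set b0 : Fin dA × Fin dB → ℂ := ((1 : Matrix (Fin dA) (Fin dA) ℂ) ⊗ₖ S0).mulVec ψ with hb0
  set b1 : Fin dA × Fin dB → ℂ := ((1 : Matrix (Fin dA) (Fin dA) ℂ) ⊗ₖ S1).mulVec ψ with hb1
  have key : ∀ (R : Matrix (Fin dA) (Fin dA) ℂ) (S : Matrix (Fin dB) (Fin dB) ℂ),
      R.IsHermitian →
      cinner ψ ((R ⊗ₖ S).mulVec ψ)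
        = cinner ((R ⊗ₖ (1 : Matrix (Fin dB) (Fin dB) ℂ)).mulVec ψ)
            (((1 : Matrix (Fin dA) (Fin dA) ℂ) ⊗ₖ S).mulVec ψ) := by
    intro R S hR
    rw [cinner_mulVec_left, kronecker_conjT, hR.eq, Matrix.conjTranspose_one,
      Matrix.mulVec_mulVec, ← Matrix.mul_kronecker_mul, Matrix.mul_one, Matrix.one_mul]
  have hunit : ∀ (R : Matrix (Fin dA) (Fin dA) ℂ), IsReflection R →
      cnorm ((R ⊗ₖ (1 : Matrix (Fin dB) (Fin dB) ℂ)).mulVec ψ) = 1 := by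
    intro R hR
    have hM : (R ⊗ₖ (1 : Matrix (Fin dB) (Fin dB) ℂ))ᴴ * (R ⊗ₖ (1 : Matrix (Fin dB) (Fin dB) ℂ)) = 1 := by
      rw [kronecker_conjT, hR.1.eq, Matrix.conjTranspose_one, ← Matrix.mul_kronecker_mul,
        hR.2, Matrix.mul_one, Matrix.one_kronecker_one]
    rw [cnorm_mulVec_of_unitary _ hM ψ]; exact hψ
  have hunitB : ∀ (S : Matrix (Fin dB) (Fin dB) ℂ), IsReflection S →
      cnorm (((1 : Matrix (Fin dA) (Fin dA) ℂ) ⊗ₖ S).mulVec ψ) = 1 := by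
    intro S hS
    have hM : ((1 : Matrix (Fin dA) (Fin dA) ℂ) ⊗ₖ S)ᴴ * ((1 : Matrix (Fin dA) (Fin dA) ℂ) ⊗ₖ S) = 1 := by
      rw [kronecker_conjT, hS.1.eq, Matrix.conjTranspose_one, ← Matrix.mul_kronecker_mul,
        hS.2, Matrix.mul_one, Matrix.one_kronecker_one]
    rw [cnorm_mulVec_of_unitary _ hM ψ]; exact hψ
  have hexp : cinner ψ ((R0 ⊗ₖ S0 + R0 ⊗ₖ S1 + R1 ⊗ₖ S0 - R1 ⊗ₖ S1).mulVec ψ)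
      = cinner a0 b0 + cinner a0 b1 + cinner a1 b0 - cinner a1 b1 := by
    simp only [Matrix.sub_mulVec, Matrix.add_mulVec, cinner_add_right, cinner_sub_right]
    rw [key R0 S0 hR0.1, key R0 S1 hR0.1, key R1 S0 hR1.1, key R1 S1 hR1.1]
  rw [hexp]
  -- move to EuclideanSpace
  set L : (Fin dA × Fin dB → ℂ) → EuclideanSpace ℂ (Fin dA × Fin dB) :=
    fun v => (WithLp.equiv 2 (Fin dA × Fin dB → ℂ)).symm v with hL
  have hna0 : ‖L a0‖ = 1 := by rw [hL]; rw [← cnorm_eq_norm]; exact hunit R0 hR0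
  have hna1 : ‖L a1‖ = 1 := by rw [hL]; rw [← cnorm_eq_norm]; exact hunit R1 hR1
  have hnb0 : ‖L b0‖ = 1 := by rw [hL]; rw [← cnorm_eq_norm]; exact hunitB S0 hS0
  have hnb1 : ‖L b1‖ = 1 := by rw [hL]; rw [← cnorm_eq_norm]; exact hunitB S1 hS1
  have hrw : (cinner a0 b0 + cinner a0 b1 + cinner a1 b0 - cinner a1 b1).re
      = RCLike.re (inner (𝕜 := ℂ) (L a0) (L b0 + L b1))
        + RCLike.re (inner (𝕜 := ℂ) (L a1) (L b0 - L b1)) := by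
    simp only [cinner_eq_inner, inner_add_right, inner_sub_right, hL,
      Complex.add_re, Complex.sub_re, RCLike.re_to_complex]
    ring
  rw [hrw]
  have h1 := re_inner_le_norm (𝕜 := ℂ) (L a0) (L b0 + L b1)
  have h2 := re_inner_le_norm (𝕜 := ℂ) (L a1) (L b0 - L b1)
  rw [hna0, one_mul] at h1
  rw [hna1, one_mul] at h2
  have hpar := parallelogram_law_with_norm ℂ (L b0) (L b1)
  rw [hnb0, hnb1] at hpar
  have hs : (0:ℝ) ≤ ‖L b0 + L b1‖ := norm_nonneg _
  have ht : (0:ℝ) ≤ ‖L b0 - L b1‖ := norm_nonneg _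
  nlinarith [Real.sq_sqrt (by norm_num : (2:ℝ) ≥ 0), Real.sqrt_nonneg 2,
    sq_nonneg (‖L b0 + L b1‖ - ‖L b0 - L b1‖),
    sq_nonneg (‖L b0 + L b1‖ + ‖L b0 - L b1‖ - 2 * Real.sqrt 2)]


end
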